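/- Let a be a nonzero real number. If a = (1+x)/(1+y) where x and y are each either 0 or a complex root of unity, and y ≠ −1, then a ∈ {1/2, 1, 2}. -/

import Mathlib

lemma aux_nonneg_pow (t : ℝ) (ht : 0 ≤ t) (n : ℕ) (hn : 0 < n) (h : t ^ n = 1) : t = 1 := by
  rcases lt_trichotomy t 1 with h1 | h1 | h1
  · have := pow_lt_one₀ ht h1 hn.ne'
    linarith
  · exact h1
  · have := one_lt_pow₀ h1 hn.ne'
    linarith

lemma aux_real_root (r : ℝ) (n : ℕ) (hn : 0 < n) (h : r ^ n = 1) : r = 1 ∨ r = -1 := by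
  have habs : |r| ^ n = 1 := by rw [← abs_pow, h, abs_one]
  have := aux_nonneg_pow |r| (abs_nonneg r) n hn habs
  exact (abs_eq (by norm_num : (0:ℝ) ≤ 1)).mp this

lemma aux_conj_inv {z : ℂ} {n : ℕ} (hn : 0 < n) (h : z ^ n = 1) :
    z * (starRingEnd ℂ) z = 1 := by
  have habs : ‖z‖ = 1 := by
    have : ‖z‖ ^ n = 1 := by rw [← norm_pow, h, norm_one]
    exact aux_nonneg_pow _ (norm_nonneg z) n hn this
  rw [Complex.mul_conj, Complex.normSq_eq_norm_sq, habs]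
  norm_num

theorem ratio_one_plus_roots_of_unity (a : ℝ) (ha : a ≠ 0) (x y : ℂ)
    (hx : x = 0 ∨ ∃ n : ℕ, 0 < n ∧ x ^ n = 1)
    (hy : y = 0 ∨ ∃ n : ℕ, 0 < n ∧ y ^ n = 1)
    (hy1 : y ≠ -1)
    (h : (a : ℂ) = (1 + x) / (1 + y)) :
    a = 1 / 2 ∨ a = 1 ∨ a = 2 := by
  have hyne : (1 : ℂ) + y ≠ 0 := by
    intro hc; apply hy1; linear_combination hc
  have haC : (a : ℂ) ≠ 0 := by exact_mod_cast ha
  have key : (a : ℂ) * (1 + y) = 1 + x := by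
    field_simp at h; linear_combination h
  have keyc : (a : ℂ) * (1 + (starRingEnd ℂ) y) = 1 + (starRingEnd ℂ) x := by
    have := congrArg (starRingEnd ℂ) key
    simpa using this
  rcases hx with hx0 | ⟨m, hm, hxm⟩
  · rcases hy with hy0 | ⟨n, hn, hyn⟩
    · right; left
      subst hx0 hy0
      have h1 : (a : ℂ) = 1 := by linear_combination key
      exact_mod_cast h1
    · subst hx0
      have hyval : y = ((1/a - 1 : ℝ) : ℂ) := by
        push_cast
        field_simp
        linear_combination key
      have hr : (1/a - 1 : ℝ) ^ n = 1 := by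
        have h2 : (((1/a - 1 : ℝ) : ℂ)) ^ n = 1 := by rw [← hyval]; exact hyn
        exact_mod_cast h2
      rcases aux_real_root _ n hn hr with h1 | h1
      · left
        have hyy : y = 1 := by rw [hyval, h1]; norm_num
        rw [hyy] at key
        have h3 : ((a : ℝ) : ℂ) = ((1/2 : ℝ) : ℂ) := by push_cast; linear_combination key/2
        exact_mod_cast h3
      · exfalso
        apply hy1
        rw [hyval, h1]; norm_num
  · rcases hy with hy0 | ⟨n, hn, hyn⟩
    · subst hy0
      have hxval : x = ((a - 1 : ℝ) : ℂ) := by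
        push_cast; linear_combination -key
      have hr : (a - 1 : ℝ) ^ m = 1 := by
        have h2 : (((a - 1 : ℝ) : ℂ)) ^ m = 1 := by rw [← hxval]; exact hxm
        exact_mod_cast h2
      rcases aux_real_root _ m hm hr with h1 | h1
      · right; right; linarith
      · exfalso; apply ha; linarith
    · right; left
      have hcx := aux_conj_inv hm hxm
      have hcy := aux_conj_inv hn hyn
      have e2 : (a : ℂ) * (x * y + x) = y + x * y := by
        linear_combination (x*y)*keyc - ((a:ℂ)*x)*hcy + y*hcx
      have h0 : (a : ℂ) * (1 + y) * (x - y) = 0 := by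
        linear_combination e2 - y*key
      have hxy : x = y := by
        rcases mul_eq_zero.mp h0 with h' | h'
        · exact absurd h' (mul_ne_zero haC hyne)
        · linear_combination h'
      rw [hxy] at key
      have h1 : ((a : ℂ) - 1) * (1 + y) = 0 := by linear_combination key
      rcases mul_eq_zero.mp h1 with h' | h'
      · have : (a : ℂ) = 1 := by linear_combination h'
        exact_mod_cast this
      · exact absurd h' hyne
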